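/- Let m ≥ 1 be an integer, let Γ be a symmetric positive definite real m×m matrix, and write λmax(Γ⁻¹) for the largest eigenvalue of Γ⁻¹. For any θ, θ̂ ∈ ℝ^m, setting θ̃ = θ − θ̂, one has θ̃ᵀθ̂ ≤ (1/2)·θᵀθ + m/8 − (λmax(Γ⁻¹))^{−3/4} · ((θ̃ᵀ Γ⁻¹ θ̃)/2)^{3/4}. -/

import Mathlib

open Matrix

lemma rayleigh_aux {m : ℕ} {A : Matrix (Fin m) (Fin m) ℝ} (hA : A.IsHermitian)
    (x : Fin m → ℝ) :
    x ⬝ᵥ (A *ᵥ x) ≤ (⨆ i, hA.eigenvalues i) * (x ⬝ᵥ x) := by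
  classical
  set U : Matrix (Fin m) (Fin m) ℝ := (hA.eigenvectorUnitary : Matrix (Fin m) (Fin m) ℝ) with hU
  set y : Fin m → ℝ := x ᵥ* U with hy
  have hUU : U * star U = 1 := (Matrix.mem_unitaryGroup_iff).mp hA.eigenvectorUnitary.2
  have hsU : star U = Uᵀ := by
    ext i j; simp [Matrix.star_apply]
  have hstar : star U *ᵥ x = y := by
    rw [hy, hsU, Matrix.mulVec_transpose]
  have h1 : x ⬝ᵥ (A *ᵥ x) = ∑ i, hA.eigenvalues i * (y i * y i) := by
    conv_lhs => rw [hA.spectral_theorem, Unitary.conjStarAlgAut_apply]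
    rw [← hU, ← Matrix.mulVec_mulVec, ← Matrix.mulVec_mulVec, hstar,
      Matrix.dotProduct_mulVec, hy]
    simp [Matrix.mulVec_diagonal, dotProduct, mul_assoc]
    exact Finset.sum_congr rfl fun i _ => by ring
  have h2 : x ⬝ᵥ x = ∑ i, y i * y i := by
    have t1 : y ⬝ᵥ y = (y ᵥ* star U) ⬝ᵥ x := by rw [← hstar, Matrix.dotProduct_mulVec]
    have h3 : y ᵥ* star U = x := by
      rw [hy, Matrix.vecMul_vecMul, hUU, Matrix.vecMul_one]
    rw [h3] at t1
    rw [← t1]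
    simp [dotProduct]
  rw [h1, h2, Finset.mul_sum]
  refine Finset.sum_le_sum fun i _ => ?_
  have hle : hA.eigenvalues i ≤ ⨆ j, hA.eigenvalues j :=
    le_ciSup (Set.Finite.bddAbove (Set.finite_range _)) i
  exact mul_le_mul_of_nonneg_right hle (mul_self_nonneg _)

lemma young_aux {t : ℝ} (ht : 0 ≤ t) : t ^ ((3:ℝ)/4) ≤ t + 1/8 := by
  set u := t ^ ((1:ℝ)/4) with hu
  have hu0 : 0 ≤ u := Real.rpow_nonneg ht _
  have h3 : t ^ ((3:ℝ)/4) = u ^ (3:ℕ) := by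
    rw [hu, ← Real.rpow_natCast (t ^ ((1:ℝ)/4)) 3, ← Real.rpow_mul ht]
    norm_num
  have h4 : t = u ^ (4:ℕ) := by
    rw [hu, ← Real.rpow_natCast (t ^ ((1:ℝ)/4)) 4, ← Real.rpow_mul ht]
    norm_num
  rw [h3]; rw [h4]
  nlinarith [sq_nonneg (u^2 - u), sq_nonneg (u - 1/2), sq_nonneg u, sq_nonneg (u^2 - u - 1/4)]

theorem stmt_5 (m : ℕ) (hm : 1 ≤ m) (Γ : Matrix (Fin m) (Fin m) ℝ)
    (hΓ : Γ.PosDef) (hH : (Γ⁻¹).IsHermitian) (θ θhat : Fin m → ℝ) :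
    (θ - θhat) ⬝ᵥ θhat ≤
      (1 / 2) * (θ ⬝ᵥ θ) + (m : ℝ) / 8 -
        (⨆ i, hH.eigenvalues i) ^ (-(3 : ℝ) / 4) *
          (((θ - θhat) ⬝ᵥ (Γ⁻¹ *ᵥ (θ - θhat))) / 2) ^ ((3 : ℝ) / 4) := by
  classical
  set x : Fin m → ℝ := θ - θhat with hx
  set s : ℝ := x ⬝ᵥ x with hs
  set q : ℝ := x ⬝ᵥ (Γ⁻¹ *ᵥ x) with hq
  set L : ℝ := ⨆ i, hH.eigenvalues i with hL
  have hinv : (Γ⁻¹).PosDef := hΓ.inv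
  have hL0 : 0 < L := lt_of_lt_of_le (hinv.eigenvalues_pos ⟨0, hm⟩)
    (le_ciSup (Set.Finite.bddAbove (Set.finite_range _)) _)
  have hs0 : 0 ≤ s := by
    rw [hs]; exact Finset.sum_nonneg fun i _ => mul_self_nonneg _
  have hq0 : 0 ≤ q := by
    rcases eq_or_ne x 0 with h | h
    · simp [hq, h]
    · exact le_of_lt (by simpa using hinv.dotProduct_mulVec_pos h)
  have hqL : q ≤ L * s := rayleigh_aux hH x
  -- step 2
  have hstep2 : L ^ (-(3:ℝ)/4) * (q/2) ^ ((3:ℝ)/4) ≤ (s/2) ^ ((3:ℝ)/4) := by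
    have h1 : (q/2) ^ ((3:ℝ)/4) ≤ (L * (s/2)) ^ ((3:ℝ)/4) := by
      apply Real.rpow_le_rpow (by linarith) (by linarith) (by norm_num)
    have h2 : (L * (s/2)) ^ ((3:ℝ)/4) = L ^ ((3:ℝ)/4) * (s/2) ^ ((3:ℝ)/4) :=
      Real.mul_rpow hL0.le (by linarith)
    calc L ^ (-(3:ℝ)/4) * (q/2) ^ ((3:ℝ)/4)
        ≤ L ^ (-(3:ℝ)/4) * (L ^ ((3:ℝ)/4) * (s/2) ^ ((3:ℝ)/4)) := by
          rw [← h2]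
          exact mul_le_mul_of_nonneg_left h1 (Real.rpow_nonneg hL0.le _)
      _ = (s/2) ^ ((3:ℝ)/4) := by
          rw [← mul_assoc, ← Real.rpow_add hL0]
          norm_num
  -- step 3
  have hstep3 : (s/2) ^ ((3:ℝ)/4) ≤ s/2 + 1/8 := young_aux (by linarith)
  -- step 1
  have hstep1 : x ⬝ᵥ θhat ≤ (1/2) * (θ ⬝ᵥ θ) - s/2 := by
    have hexp : x ⬝ᵥ θhat = x ⬝ᵥ θ - s := by
      have h : θhat = θ - x := by rw [hx]; abel
      rw [h, dotProduct_sub, hs]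
    have hyoung : x ⬝ᵥ θ ≤ s/2 + (θ ⬝ᵥ θ)/2 := by
      have h := Finset.sum_nonneg (fun i (_ : i ∈ Finset.univ) => mul_self_nonneg (x i - θ i))
      have hexpand : ∑ i, (x i - θ i) * (x i - θ i)
          = s - 2 * (x ⬝ᵥ θ) + θ ⬝ᵥ θ := by
        rw [hs]
        simp only [dotProduct, Finset.mul_sum, ← Finset.sum_add_distrib,
          ← Finset.sum_sub_distrib]
        congr 1 with i
        ring
      rw [hexpand] at h
      linarith
    linarith
  have hm1 : (1:ℝ) ≤ (m:ℝ) := by exact_mod_cast hm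
  calc x ⬝ᵥ θhat ≤ (1/2) * (θ ⬝ᵥ θ) - s/2 := hstep1
    _ ≤ (1/2) * (θ ⬝ᵥ θ) + (m:ℝ)/8 - (s/2 + 1/8) := by linarith
    _ ≤ (1/2) * (θ ⬝ᵥ θ) + (m:ℝ)/8 - (s/2) ^ ((3:ℝ)/4) := by linarith
    _ ≤ (1/2) * (θ ⬝ᵥ θ) + (m:ℝ)/8 - L ^ (-(3:ℝ)/4) * (q/2) ^ ((3:ℝ)/4) := by linarith
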